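/- arXiv:1605.05114 — 8 statements merged into one kernel-verified Lean document; each statement's English description precedes it below -/
import Mathlib

section
/- The dimension of a simple game G = (P, W) with W ≠ 2^P and ∅ ∉ W is at most the number of maximal losing coalitions of G: G can be written as the intersection of |L_max| weighted games. -/
def IsWeighted {α : Type*} [Fintype α] (W : Finset α → Prop) : Prop :=
  ∃ (w : α → ℝ) (q : ℝ), (∀ i, 0 ≤ w i) ∧ 0 < q ∧ ∀ X : Finset α, W X ↔ q ≤ ∑ i ∈ X, w i

/-- The dimension of a simple game `G = (P, W)` with `W ≠ 2^P` and `∅ ∉ W` is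
at most the number of maximal losing coalitions: `G` can be written as the
intersection of a family of weighted games indexed by the maximal losing
coalitions. -/
theorem dimension_le_card_maximal_losing {α : Type*} [Fintype α]
    (W : Finset α → Prop)
    (hmono : ∀ X Y : Finset α, X ⊆ Y → W X → W Y)
    (hproper : ∃ X : Finset α, ¬ W X)
    (hempty : ¬ W (∅ : Finset α)) :
    ∃ V : {X : Finset α // ¬ W X ∧ ∀ Y : Finset α, X ⊂ Y → W Y} → Finset α → Prop,
      (∀ l, IsWeighted (V l)) ∧ ∀ X : Finset α, W X ↔ ∀ l, V l X := by
  classical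
  refine ⟨fun l X => ¬ X ⊆ l.1, fun l => ?_, fun X => ?_⟩
  · refine ⟨fun i => if i ∉ l.1 then 1 else 0, 1, fun i => ?_, one_pos, fun X => ?_⟩
    · dsimp only; split <;> norm_num
    · rw [Finset.sum_boole]
      constructor
      · intro h
        obtain ⟨i, hiX, hiL⟩ := Finset.not_subset.mp h
        have : (1:ℝ) ≤ ((X.filter (fun i => i ∉ l.1)).card : ℝ) := by
          have : 0 < (X.filter (fun i => i ∉ l.1)).card :=
            Finset.card_pos.mpr ⟨i, Finset.mem_filter.mpr ⟨hiX, hiL⟩⟩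
          exact_mod_cast this
        exact this
      · intro h hsub
        have hpos : 0 < (X.filter (fun i => i ∉ l.1)).card := by exact_mod_cast h.trans_lt' zero_lt_one
        obtain ⟨i, hi⟩ := Finset.card_pos.mp hpos
        obtain ⟨hiX, hiL⟩ := Finset.mem_filter.mp hi
        exact hiL (hsub hiX)
  · constructor
    · intro hW l hsub
      exact l.2.1 (hmono X l.1 hsub hW)
    · intro h
      by_contra hX
      set S : Finset (Finset α) := Finset.univ.filter (fun Y => X ⊆ Y ∧ ¬ W Y) with hS
      have hXS : X ∈ S := Finset.mem_filter.mpr ⟨Finset.mem_univ _, subset_refl _, hX⟩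
      obtain ⟨L, hLS, hLmax⟩ := S.exists_max_image Finset.card ⟨X, hXS⟩
      obtain ⟨-, hXL, hLlose⟩ := Finset.mem_filter.mp hLS
      have hLmaximal : ∀ Y : Finset α, L ⊂ Y → W Y := by
        intro Y hLY
        by_contra hYlose
        have hYS : Y ∈ S := Finset.mem_filter.mpr ⟨Finset.mem_univ _, hXL.trans hLY.subset, hYlose⟩
        exact absurd (hLmax Y hYS) (not_le.mpr (Finset.card_lt_card hLY))
      exact h ⟨L, hLlose, hLmaximal⟩ hXL
end

section
/- (Kurz–Napel criterion) Let G = (P, W) be a simple game and S = {Y_1,...,Y_k} a set of losing coalitions such that for each pair i ≠ j there is no weighted simple game in which every coalition of W is winning and both Y_i and Y_j are losing. Then G cannot be written as the intersection of fewer than k weighted games; in particular dim(G) ≥ k. -/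
/-- Kurz–Napel criterion: if `Y₁,…,Y_k` are pairwise distinct losing coalitions
of `G` such that for each pair `i ≠ j` there is no weighted game in which every
winning coalition of `G` wins while both `Yᵢ` and `Yⱼ` lose, then `G` cannot be
an intersection of fewer than `k` weighted games. -/
theorem kurz_napel {α : Type*} [Fintype α]
    (W : Finset α → Prop)
    (hmono : ∀ X Y : Finset α, X ⊆ Y → W X → W Y)
    (k : ℕ) (Y : Fin k → Finset α) (hinj : Function.Injective Y)
    (hlose : ∀ i, ¬ W (Y i))
    (hincomp : ∀ i j : Fin k, i ≠ j →
      ¬ ∃ V : Finset α → Prop, IsWeighted V ∧ (∀ X, W X → V X) ∧ ¬ V (Y i) ∧ ¬ V (Y j))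
    (d : ℕ) (V : Fin d → Finset α → Prop)
    (hVw : ∀ t, IsWeighted (V t))
    (hrep : ∀ X : Finset α, W X ↔ ∀ t, V t X) :
    k ≤ d := by
  have h : ∀ i : Fin k, ∃ t : Fin d, ¬ V t (Y i) := by
    intro i
    by_contra h
    push_neg at h
    exact hlose i ((hrep (Y i)).mpr h)
  choose t ht using h
  have htinj : Function.Injective t := by
    intro i j hij
    by_contra hne
    exact hincomp i j hne ⟨V (t i), hVw (t i),
      fun X hX => (hrep X).mp hX (t i), ht i, hij ▸ ht j⟩
  simpa using Fintype.card_le_of_injective t htinj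
end

section
/- If (X_1, X_2; Y_i, Y_j) is a trading transform with X_1, X_2 winning coalitions of a simple game G, then there is no weighted simple game in which all winning coalitions of G are winning but Y_i and Y_j are both losing. -/
/-- If `(X₁, X₂; Y₁, Y₂)` is a trading transform with `X₁, X₂` winning in `G`,
then there is no weighted simple game in which all winning coalitions of `G`
are winning but `Y₁` and `Y₂` are both losing. -/
theorem trading_transform_incompatible {α : Type*} [Fintype α] [DecidableEq α]
    (W : Finset α → Prop)
    (hmono : ∀ X Y : Finset α, X ⊆ Y → W X → W Y)
    (X₁ X₂ Y₁ Y₂ : Finset α)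
    (htrade : ∀ a : α,
      ((if a ∈ X₁ then 1 else 0) + (if a ∈ X₂ then 1 else 0) : ℕ) =
      (if a ∈ Y₁ then 1 else 0) + (if a ∈ Y₂ then 1 else 0))
    (hX₁ : W X₁) (hX₂ : W X₂) :
    ¬ ∃ V : Finset α → Prop, IsWeighted V ∧ (∀ X, W X → V X) ∧ ¬ V Y₁ ∧ ¬ V Y₂ := by
  rintro ⟨V, ⟨w, q, hw, hq, hV⟩, hWV, hY₁, hY₂⟩
  have key : ∀ X : Finset α, ∑ i ∈ X, w i = ∑ a : α, (if a ∈ X then (1:ℕ) else 0) * w a := by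
    intro X
    rw [← Finset.sum_filter_add_sum_filter_not Finset.univ (· ∈ X)
      (fun a => (if a ∈ X then (1:ℕ) else 0) * w a)]
    have h1 : ∀ a ∈ Finset.univ.filter (· ∈ X), (if a ∈ X then (1:ℕ) else 0) * w a = w a := by
      intro a ha; simp at ha; simp [ha]
    have h2 : ∀ a ∈ Finset.univ.filter (¬ · ∈ X), (if a ∈ X then (1:ℕ) else 0) * w a = 0 := by
      intro a ha; simp at ha; simp [ha]
    rw [Finset.sum_congr rfl h1, Finset.sum_congr rfl h2, Finset.sum_const_zero, add_zero]
    congr 1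
    ext a; simp
  have hsum : ∑ i ∈ X₁, w i + ∑ i ∈ X₂, w i = ∑ i ∈ Y₁, w i + ∑ i ∈ Y₂, w i := by
    rw [key X₁, key X₂, key Y₁, key Y₂, ← Finset.sum_add_distrib, ← Finset.sum_add_distrib]
    apply Finset.sum_congr rfl
    intro a _
    rw [← add_mul, ← add_mul]
    congr 1
    exact_mod_cast congrArg (Nat.cast : ℕ → ℝ) (htrade a)
  have h1 : q ≤ ∑ i ∈ X₁, w i := (hV X₁).mp (hWV X₁ hX₁)
  have h2 : q ≤ ∑ i ∈ X₂, w i := (hV X₂).mp (hWV X₂ hX₂)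
  have h3 : ∑ i ∈ Y₁, w i < q := lt_of_not_ge (fun h => hY₁ ((hV Y₁).mpr h))
  have h4 : ∑ i ∈ Y₂, w i < q := lt_of_not_ge (fun h => hY₂ ((hV Y₂).mpr h))
  linarith
end

section
/- Let d ≥ 2, P = P_0 ∪ P_1 with |P_0| = d, |P_1| = 2d, and let H be the simple game on P in which a coalition X is winning iff |X ∩ P_0| ≥ 2 or |X| ≥ 4. Then H cannot be represented as the intersection of fewer than d weighted simple games, i.e., dim(H) ≥ d. -/
/-- Let `d ≥ 2`, `P = P₀ ∪ P₁` with `|P₀| = d`, `|P₁| = 2d`, and let `H` be the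
game where `X` wins iff `|X ∩ P₀| ≥ 2` or `|X| ≥ 4` (the disjunctive
hierarchical game `H_∃(P,(2,4))`). Then `H` is not an intersection of fewer
than `d` weighted games, i.e. `dim H ≥ d`. -/
theorem hexists24_dim_ge {α : Type*} [Fintype α] [DecidableEq α]
    (d : ℕ) (hd : 2 ≤ d)
    (P₀ P₁ : Finset α) (hdisj : Disjoint P₀ P₁) (hcover : P₀ ∪ P₁ = Finset.univ)
    (h₀ : P₀.card = d) (h₁ : P₁.card = 2 * d)
    (W : Finset α → Prop)
    (hW : ∀ X : Finset α, W X ↔ 2 ≤ (X ∩ P₀).card ∨ 4 ≤ X.card)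
    (n : ℕ) (V : Fin n → Finset α → Prop)
    (hVw : ∀ i, IsWeighted (V i))
    (hrep : ∀ X : Finset α, W X ↔ ∀ i, V i X) :
    d ≤ n := by
  classical
  have hdle : d ≤ 2 * d := by omega
  let a : Fin d → α := fun k => (P₀.equivFin.symm (Fin.cast h₀.symm k) : α)
  let b : Fin (2 * d) → α := fun k => (P₁.equivFin.symm (Fin.cast h₁.symm k) : α)
  have haP : ∀ k, a k ∈ P₀ := fun k => (P₀.equivFin.symm _).2
  have hbP : ∀ k, b k ∈ P₁ := fun k => (P₁.equivFin.symm _).2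
  have hainj : Function.Injective a := by
    intro x y h
    have h1 : P₀.equivFin.symm (Fin.cast h₀.symm x) = P₀.equivFin.symm (Fin.cast h₀.symm y) :=
      Subtype.coe_injective h
    have h2 := P₀.equivFin.symm.injective h1
    exact Fin.ext (by simpa using congrArg Fin.val h2)
  have hbinj : Function.Injective b := by
    intro x y h
    have h1 : P₁.equivFin.symm (Fin.cast h₁.symm x) = P₁.equivFin.symm (Fin.cast h₁.symm y) :=
      Subtype.coe_injective h
    have h2 := P₁.equivFin.symm.injective h1
    exact Fin.ext (by simpa using congrArg Fin.val h2)
  have hnb : ∀ m, b m ∉ P₀ := fun m h => Finset.disjoint_left.1 hdisj h (hbP m)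
  have hab : ∀ k m, a k ≠ b m := fun k m h => hnb m (h ▸ haP k)
  let b₁ : Fin d → α := fun k => b (Fin.castLE hdle k)
  let b₂ : Fin d → α := fun k => b ⟨k.1 + d, by have := k.isLt; omega⟩
  have hab₁ : ∀ k m, a k ≠ b₁ m := fun k m => hab k _
  have hab₂ : ∀ k m, a k ≠ b₂ m := fun k m => hab k _
  have hb₁₂ : ∀ k m, b₁ k ≠ b₂ m := by
    intro k m h
    have h2 := congrArg Fin.val (hbinj h)
    simp only [Fin.coe_castLE] at h2
    have := k.isLt
    omega
  have hb₁inj : ∀ k m : Fin d, b₁ k = b₁ m → k = m := by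
    intro k m h
    have h2 := congrArg Fin.val (hbinj h)
    simp only [Fin.coe_castLE] at h2
    exact Fin.ext h2
  have hb₂inj : ∀ k m : Fin d, b₂ k = b₂ m → k = m := by
    intro k m h
    have h2 := congrArg Fin.val (hbinj h)
    simp only at h2
    exact Fin.ext (by omega)
  let L : Fin d → Finset α := fun k => {a k, b₁ k, b₂ k}
  have hb₁P₀ : ∀ m, b₁ m ∉ P₀ := fun m => hnb _
  have hb₂P₀ : ∀ m, b₂ m ∉ P₀ := fun m => hnb _
  -- L k is losing
  have hLinter : ∀ k, L k ∩ P₀ = {a k} := by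
    intro k
    ext x
    simp only [L, Finset.mem_inter, Finset.mem_insert, Finset.mem_singleton]
    constructor
    · rintro ⟨(rfl | rfl | rfl), hx⟩
      · rfl
      · exact absurd hx (hb₁P₀ k)
      · exact absurd hx (hb₂P₀ k)
    · rintro rfl
      exact ⟨Or.inl rfl, haP k⟩
  have hLcard : ∀ k, (L k).card ≤ 3 := by
    intro k
    have h1 : (L k).card ≤ ({b₁ k, b₂ k} : Finset α).card + 1 :=
      Finset.card_insert_le _ _
    have h2 : (({b₁ k, b₂ k} : Finset α)).card ≤ ({b₂ k} : Finset α).card + 1 :=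
      Finset.card_insert_le _ _
    simp only [Finset.card_singleton] at h2
    omega
  have hLlose : ∀ k, ¬ W (L k) := by
    intro k hWk
    rcases (hW (L k)).1 hWk with h | h
    · rw [hLinter k] at h; simp at h
    · have := hLcard k; omega
  -- choose rejecting weighted games
  have hex : ∀ k : Fin d, ∃ i, ¬ V i (L k) := by
    intro k
    by_contra hc
    push_neg at hc
    exact hLlose k ((hrep (L k)).2 hc)
  choose f hf using hex
  have hinj : Function.Injective f := by
    intro k j hkj
    by_contra hne
    obtain ⟨w, q, hw0, hq0, hwq⟩ := hVw (f k)
    -- the two winning coalitions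
    have hYW : W ({a k, a j} : Finset α) := by
      rw [hW]
      left
      have hsub : ({a k, a j} : Finset α) ⊆ P₀ := by
        intro x hx
        rcases Finset.mem_insert.1 hx with rfl | hx
        · exact haP k
        · rw [Finset.mem_singleton.1 hx]; exact haP j
      rw [Finset.inter_eq_left.2 hsub, Finset.card_pair (fun h => hne (hainj h))]
    have hZW : W ({b₁ k, b₂ k, b₁ j, b₂ j} : Finset α) := by
      rw [hW]
      right
      have hne₁ : b₁ k ≠ b₁ j := fun h => hne (hb₁inj _ _ h)
      have hne₂ : b₂ k ≠ b₂ j := fun h => hne (hb₂inj _ _ h)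
      have hne₃ : b₂ k ≠ b₁ j := fun h => hb₁₂ j k h.symm
      rw [Finset.card_insert_of_notMem (by
            simp only [Finset.mem_insert, Finset.mem_singleton]
            push_neg
            exact ⟨hb₁₂ k k, hne₁, hb₁₂ k j⟩),
          Finset.card_insert_of_notMem (by
            simp only [Finset.mem_insert, Finset.mem_singleton]
            push_neg
            exact ⟨hne₃, hne₂⟩),
          Finset.card_pair (hb₁₂ j j)]
    -- weight inequalities
    have hYq : q ≤ ∑ i ∈ ({a k, a j} : Finset α), w i :=
      (hwq _).1 ((hrep _).1 hYW (f k))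
    have hZq : q ≤ ∑ i ∈ ({b₁ k, b₂ k, b₁ j, b₂ j} : Finset α), w i :=
      (hwq _).1 ((hrep _).1 hZW (f k))
    have hLkq : ∑ i ∈ L k, w i < q := by
      by_contra h
      exact hf k ((hwq _).2 (not_lt.1 h))
    have hLjq : ∑ i ∈ L j, w i < q := by
      by_contra h
      exact (hkj ▸ hf j) ((hwq _).2 (not_lt.1 h))
    -- compute the sums
    have hsY : ∑ i ∈ ({a k, a j} : Finset α), w i = w (a k) + w (a j) :=
      Finset.sum_pair (fun h => hne (hainj h))
    have hsZ : ∑ i ∈ ({b₁ k, b₂ k, b₁ j, b₂ j} : Finset α), w i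
        = w (b₁ k) + (w (b₂ k) + (w (b₁ j) + w (b₂ j))) := by
      rw [Finset.sum_insert (by
            simp only [Finset.mem_insert, Finset.mem_singleton]
            push_neg
            exact ⟨hb₁₂ k k, fun h => hne (hb₁inj _ _ h), hb₁₂ k j⟩),
          Finset.sum_insert (by
            simp only [Finset.mem_insert, Finset.mem_singleton]
            push_neg
            exact ⟨fun h => hb₁₂ j k h.symm, fun h => hne (hb₂inj _ _ h)⟩),
          Finset.sum_pair (hb₁₂ j j)]
    have hsL : ∀ m, ∑ i ∈ L m, w i = w (a m) + (w (b₁ m) + w (b₂ m)) := by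
      intro m
      show ∑ i ∈ insert (a m) ({b₁ m, b₂ m} : Finset α), w i = _
      rw [Finset.sum_insert (by
            simp only [Finset.mem_insert, Finset.mem_singleton]
            push_neg
            exact ⟨hab₁ m m, hab₂ m m⟩),
          Finset.sum_pair (hb₁₂ m m)]
    rw [hsL k] at hLkq
    rw [hsL j] at hLjq
    rw [hsY] at hYq
    rw [hsZ] at hZq
    linarith
  have := Fintype.card_le_of_injective f hinj
  simpa using this
end

section
/- Let k ≥ 2 and m ≥ 2, P = P_0 ∪ P_1 ∪ ... ∪ P_{m−1} with |P_0| = k and |P_i| = 2k for 1 ≤ i ≤ m−1, and let H be the game in which X is winning iff |X ∩ (P_0 ∪ ... ∪ P_i)| ≥ 2(i+1) for some i ∈ {0,...,m−1}. Then dim(H) ≥ k^{m−1}. -/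
/-- Let `k ≥ 2`, `m ≥ 2`, and `P = P₀ ∪ … ∪ P_{m-1}` with `|P₀| = k` and
`|Pᵢ| = 2k` for `i ≥ 1`. Let `H` be the disjunctive hierarchical game in which
`X` wins iff `|X ∩ (P₀ ∪ … ∪ Pᵢ)| ≥ 2(i+1)` for some `i`. Then
`dim H ≥ k^(m-1)`. -/
theorem hexists_dim_ge_pow {α : Type*} [Fintype α] [DecidableEq α]
    (k m : ℕ) (hk : 2 ≤ k) (hm : 2 ≤ m)
    (P : Fin m → Finset α)
    (hdisj : ∀ i j : Fin m, i ≠ j → Disjoint (P i) (P j))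
    (hcover : (Finset.univ : Finset (Fin m)).biUnion P = Finset.univ)
    (h₀ : (P ⟨0, by omega⟩).card = k)
    (hi : ∀ i : Fin m, 1 ≤ (i : ℕ) → (P i).card = 2 * k)
    (W : Finset α → Prop)
    (hW : ∀ X : Finset α, W X ↔ ∃ i : Fin m,
      2 * ((i : ℕ) + 1) ≤ (X ∩ (Finset.univ.filter (· ≤ i)).biUnion P).card)
    (n : ℕ) (V : Fin n → Finset α → Prop)
    (hVw : ∀ t, IsWeighted (V t))
    (hrep : ∀ X : Finset α, W X ↔ ∀ t, V t X) :
    k ^ (m - 1) ≤ n := by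
  classical
  have hm0 : 0 < m := by omega
  haveI : NeZero k := ⟨by omega⟩
  set i0 : Fin m := ⟨0, hm0⟩ with hi0def
  have hcard : ∀ i : Fin m, (P i).card = if (i : ℕ) = 0 then k else 2 * k := by
    intro i
    by_cases h : (i : ℕ) = 0
    · rw [if_pos h]
      have hieq : i = ⟨0, by omega⟩ := Fin.ext h
      rw [hieq]; exact h₀
    · rw [if_neg h]; exact hi i (by omega)
  have hα : Nonempty α := by
    have h1 : (P i0).Nonempty := Finset.card_pos.mp (by rw [hcard]; simp [hi0def]; omega)
    exact ⟨h1.choose⟩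
  -- enumeration of each part
  set a : Fin m → ℕ → α := fun i l =>
    if h : l < (P i).card then ((P i).equivFin.symm ⟨l, h⟩ : α)
    else Classical.arbitrary α with hadef
  have ha_mem : ∀ i l, l < (P i).card → a i l ∈ P i := by
    intro i l h
    simp only [hadef, dif_pos h]
    exact ((P i).equivFin.symm ⟨l, h⟩).2
  have ha_inj : ∀ i l l', l < (P i).card → l' < (P i).card → a i l = a i l' → l = l' := by
    intro i l l' h h' heq
    simp only [hadef, dif_pos h, dif_pos h'] at heq
    have h2 := (P i).equivFin.symm.injective (Subtype.ext heq)
    exact congrArg Fin.val h2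
  -- blocks: a singleton in P₀, disjoint pairs in the other Pᵢ
  set S : Fin m → ZMod k → Finset α := fun i j =>
    if (i : ℕ) = 0 then {a i j.val} else {a i (2 * j.val), a i (2 * j.val + 1)} with hSdef
  have hjlt : ∀ j : ZMod k, j.val < k := fun j => ZMod.val_lt j
  have hS_sub : ∀ i j, S i j ⊆ P i := by
    intro i j x hx
    by_cases h : (i : ℕ) = 0
    · simp only [hSdef, if_pos h, Finset.mem_singleton] at hx
      subst hx
      exact ha_mem _ _ (by rw [hcard, if_pos h]; exact hjlt j)
    · simp only [hSdef, if_neg h, Finset.mem_insert, Finset.mem_singleton] at hx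
      have hc : (P i).card = 2 * k := by rw [hcard, if_neg h]
      have hv := hjlt j
      rcases hx with h1 | h1 <;> subst h1 <;> exact ha_mem _ _ (by omega)
  have hS_card : ∀ i j, (S i j).card = if (i : ℕ) = 0 then 1 else 2 := by
    intro i j
    by_cases h : (i : ℕ) = 0
    · simp [hSdef, h]
    · rw [if_neg h]
      simp only [hSdef, if_neg h]
      rw [Finset.card_insert_of_notMem, Finset.card_singleton]
      simp only [Finset.mem_singleton]
      intro heq
      have hc : (P i).card = 2 * k := by rw [hcard, if_neg h]
      have hv := hjlt j
      have := ha_inj i _ _ (by omega) (by omega) heq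
      omega
  have hS_disj : ∀ i j j', j ≠ j' → Disjoint (S i j) (S i j') := by
    intro i j j' hne
    rw [Finset.disjoint_left]
    intro x hx hx'
    apply hne
    apply ZMod.val_injective k
    have hv := hjlt j
    have hv' := hjlt j'
    by_cases h : (i : ℕ) = 0
    · have hc : (P i).card = k := by rw [hcard, if_pos h]
      simp only [hSdef, if_pos h, Finset.mem_singleton] at hx hx'
      exact ha_inj i _ _ (by omega) (by omega) (hx.symm.trans hx')
    · have hc : (P i).card = 2 * k := by rw [hcard, if_neg h]
      simp only [hSdef, if_neg h, Finset.mem_insert, Finset.mem_singleton] at hx hx'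
      rcases hx with h1 | h1 <;> rcases hx' with h2 | h2 <;>
        · have := ha_inj i _ _ (by omega) (by omega) (h1.symm.trans h2)
          omega
  -- the cumulative unions
  set Q : Fin m → Finset α := fun l => (Finset.univ.filter (· ≤ l)).biUnion P with hQdef
  have hW' : ∀ X : Finset α, W X ↔ ∃ i : Fin m,
      2 * ((i : ℕ) + 1) ≤ (X ∩ Q i).card := fun X => hW X
  have hQP : ∀ (l i : Fin m), i ≤ l → P i ⊆ Q l := by
    intro l i h x hx
    simp only [hQdef]
    exact Finset.mem_biUnion.mpr ⟨i, Finset.mem_filter.mpr ⟨Finset.mem_univ _, h⟩, hx⟩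
  have hPQ_disj : ∀ (l i : Fin m), ¬ i ≤ l → Disjoint (P i) (Q l) := by
    intro l i h
    rw [Finset.disjoint_left]
    intro x hxP hxQ
    simp only [hQdef] at hxQ
    obtain ⟨i', hi', hx'⟩ := Finset.mem_biUnion.mp hxQ
    have hne : i ≠ i' := by
      rintro rfl
      exact h (Finset.mem_filter.mp hi').2
    exact Finset.disjoint_left.mp (hdisj i i' hne) hxP hx'
  have hQ_mono : ∀ {l l' : Fin m}, l ≤ l' → Q l ⊆ Q l' := by
    intro l l' h x hx
    simp only [hQdef] at hx ⊢
    obtain ⟨i, hi', hx'⟩ := Finset.mem_biUnion.mp hx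
    exact Finset.mem_biUnion.mpr ⟨i, Finset.mem_filter.mpr
      ⟨Finset.mem_univ _, le_trans (Finset.mem_filter.mp hi').2 h⟩, hx'⟩
  -- the losing coalitions
  set A : (Fin m → ZMod k) → Finset α :=
    fun v => Finset.univ.biUnion fun i => S i (v i) with hAdef
  have hA_sub : ∀ v (i : Fin m), S i (v i) ⊆ A v := by
    intro v i
    simp only [hAdef]
    exact Finset.subset_biUnion_of_mem (fun i => S i (v i)) (Finset.mem_univ i)
  have hAP : ∀ v (i : Fin m), A v ∩ P i = S i (v i) := by
    intro v i
    ext x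
    simp only [Finset.mem_inter, hAdef, Finset.mem_biUnion, Finset.mem_univ, true_and]
    constructor
    · rintro ⟨⟨i', hx'⟩, hxP⟩
      have heq : i' = i := by
        by_contra hne
        exact Finset.disjoint_left.mp (hdisj i' i hne) (hS_sub _ _ hx') hxP
      rwa [heq] at hx'
    · intro hx
      exact ⟨⟨i, hx⟩, hS_sub _ _ hx⟩
  have hfilter_card : ∀ l : Fin m, (Finset.univ.filter (· ≤ l)).card = l.1 + 1 := by
    intro l
    have h1 : (Finset.univ.filter (· ≤ l)) = Finset.Iic l := by ext x; simp
    rw [h1, Fin.card_Iic]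
  have hAQ_card : ∀ v (l : Fin m), (A v ∩ Q l).card = 2 * l.1 + 1 := by
    intro v l
    have hAQ : A v ∩ Q l = (Finset.univ.filter (· ≤ l)).biUnion (fun i => S i (v i)) := by
      ext x
      simp only [Finset.mem_inter, hAdef, hQdef, Finset.mem_biUnion, Finset.mem_filter,
        Finset.mem_univ, true_and]
      constructor
      · rintro ⟨⟨i, hxS⟩, ⟨i', hi', hxP⟩⟩
        have heq : i = i' := by
          by_contra hne
          exact Finset.disjoint_left.mp (hdisj i i' hne) (hS_sub _ _ hxS) hxP
        exact ⟨i, by rw [heq]; exact hi', hxS⟩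
      · rintro ⟨i, hil, hxS⟩
        exact ⟨⟨i, hxS⟩, ⟨i, hil, hS_sub _ _ hxS⟩⟩
    rw [hAQ]
    rw [Finset.card_biUnion (fun i _ j _ hne =>
      Disjoint.mono (hS_sub i _) (hS_sub j _) (hdisj i j hne))]
    rw [Finset.sum_congr rfl (fun i _ => hS_card i (v i))]
    have hmem0 : i0 ∈ Finset.univ.filter (· ≤ l) := by
      refine Finset.mem_filter.mpr ⟨Finset.mem_univ _, ?_⟩
      simp only [hi0def]
      exact Fin.mk_le_of_le_val (by omega)
    rw [← Finset.add_sum_erase _ _ hmem0]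
    rw [if_pos rfl]
    rw [Finset.sum_congr rfl (fun i hmem => if_neg (fun h0 =>
      (Finset.mem_erase.mp hmem).1 (Fin.ext h0)))]
    rw [Finset.sum_const, smul_eq_mul, Finset.card_erase_of_mem hmem0, hfilter_card]
    have : 1 ≤ l.1 + 1 := by omega
    omega
  have hlose : ∀ v, ¬ W (A v) := by
    intro v hWv
    obtain ⟨i, hi2⟩ := (hW' _).mp hWv
    rw [hAQ_card] at hi2
    omega
  -- two losing coalitions differing in two coordinates cannot be losing together
  have hpair : ∀ (v u : Fin m → ZMod k) (i₁ i₂ : Fin m), i₁ < i₂ →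
      v i₁ ≠ u i₁ → v i₂ ≠ u i₂ →
      ∀ t : Fin n, ¬ V t (A v) → ¬ V t (A u) → False := by
    intro v u i₁ i₂ h12 hne1 hne2 t hV1 hV2
    have h12' : (i₁ : ℕ) < (i₂ : ℕ) := h12
    have hSne : (S i₁ (u i₁)).Nonempty := by
      rw [← Finset.card_pos, hS_card]
      split <;> omega
    obtain ⟨b, hb⟩ := hSne
    have hbP : b ∈ P i₁ := hS_sub _ _ hb
    have hbB : b ∈ A u := hA_sub u i₁ hb
    have hbA : b ∉ A v := by
      intro hbA
      have hmem : b ∈ A v ∩ P i₁ := Finset.mem_inter.mpr ⟨hbA, hbP⟩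
      rw [hAP] at hmem
      exact Finset.disjoint_left.mp (hS_disj i₁ _ _ hne1) hmem hb
    have hbQ1 : b ∈ Q i₁ := hQP i₁ i₁ le_rfl hbP
    -- the two winning coalitions
    have hWC : W (insert b (A v ∩ Q i₁)) := by
      rw [hW']
      refine ⟨i₁, ?_⟩
      have hCQ : insert b (A v ∩ Q i₁) ∩ Q i₁ = insert b (A v ∩ Q i₁) := by
        apply Finset.inter_eq_left.mpr
        intro x hx
        rcases Finset.mem_insert.mp hx with rfl | hx'
        · exact hbQ1
        · exact (Finset.mem_inter.mp hx').2
      rw [hCQ, Finset.card_insert_of_notMem (fun hmem => hbA (Finset.mem_inter.mp hmem).1),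
        hAQ_card]
      omega
    have hSD2 : Disjoint (S i₂ (v i₂)) (Q i₁) :=
      Disjoint.mono_left (hS_sub _ _) (hPQ_disj i₁ i₂ (not_le.mpr h12))
    have hWD : W ((A v \ Q i₁) ∪ (A u).erase b) := by
      rw [hW']
      refine ⟨i₂, ?_⟩
      have hdisjSD : Disjoint (S i₂ (v i₂)) ((A u ∩ Q i₂).erase b) := by
        rw [Finset.disjoint_left]
        intro x hx hx'
        have hxB : x ∈ A u := (Finset.mem_inter.mp (Finset.mem_of_mem_erase hx')).1
        have hmem : x ∈ A u ∩ P i₂ := Finset.mem_inter.mpr ⟨hxB, hS_sub _ _ hx⟩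
        rw [hAP] at hmem
        exact Finset.disjoint_left.mp (hS_disj i₂ _ _ hne2) hx hmem
      have hsub : S i₂ (v i₂) ∪ (A u ∩ Q i₂).erase b
          ⊆ ((A v \ Q i₁) ∪ (A u).erase b) ∩ Q i₂ := by
        intro x hx
        rcases Finset.mem_union.mp hx with hx' | hx'
        · refine Finset.mem_inter.mpr ⟨Finset.mem_union_left _ ?_, hQP i₂ i₂ le_rfl (hS_sub _ _ hx')⟩
          exact Finset.mem_sdiff.mpr ⟨hA_sub v i₂ hx',
            fun hq => Finset.disjoint_left.mp hSD2 hx' hq⟩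
        · obtain ⟨hxne, hxm⟩ := Finset.mem_erase.mp hx'
          obtain ⟨hxB, hxQ⟩ := Finset.mem_inter.mp hxm
          exact Finset.mem_inter.mpr ⟨Finset.mem_union_right _
            (Finset.mem_erase.mpr ⟨hxne, hxB⟩), hxQ⟩
      have hcard_le := Finset.card_le_card hsub
      rw [Finset.card_union_of_disjoint hdisjSD] at hcard_le
      have h1 : (S i₂ (v i₂)).card = 2 := by
        rw [hS_card, if_neg (by omega)]
      have h2 : ((A u ∩ Q i₂).erase b).card = 2 * (i₂ : ℕ) := by
        rw [Finset.card_erase_of_mem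
          (Finset.mem_inter.mpr ⟨hbB, hQ_mono h12.le hbQ1⟩), hAQ_card]
        omega
      rw [h1, h2] at hcard_le
      omega
    -- the trading inequality
    obtain ⟨wt, q, hwt0, hq, hwt⟩ := hVw t
    have hqC : q ≤ ∑ x ∈ insert b (A v ∩ Q i₁), wt x :=
      (hwt _).mp ((hrep _).mp hWC t)
    have hqD : q ≤ ∑ x ∈ (A v \ Q i₁) ∪ (A u).erase b, wt x :=
      (hwt _).mp ((hrep _).mp hWD t)
    have hA1 : ∑ x ∈ A v, wt x < q := by
      by_contra hcon
      push_neg at hcon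
      exact hV1 ((hwt _).mpr hcon)
    have hA2 : ∑ x ∈ A u, wt x < q := by
      by_contra hcon
      push_neg at hcon
      exact hV2 ((hwt _).mpr hcon)
    have hCD_u : insert b (A v ∩ Q i₁) ∪ ((A v \ Q i₁) ∪ (A u).erase b) ⊆ A v ∪ A u := by
      intro x hx
      rcases Finset.mem_union.mp hx with hx' | hx'
      · rcases Finset.mem_insert.mp hx' with rfl | hx''
        · exact Finset.mem_union_right _ hbB
        · exact Finset.mem_union_left _ (Finset.mem_inter.mp hx'').1
      · rcases Finset.mem_union.mp hx' with hx'' | hx''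
        · exact Finset.mem_union_left _ (Finset.mem_sdiff.mp hx'').1
        · exact Finset.mem_union_right _ (Finset.mem_of_mem_erase hx'')
    have hCD_i : insert b (A v ∩ Q i₁) ∩ ((A v \ Q i₁) ∪ (A u).erase b) ⊆ A v ∩ A u := by
      intro x hx
      obtain ⟨hxC, hxD⟩ := Finset.mem_inter.mp hx
      rcases Finset.mem_insert.mp hxC with rfl | hx''
      · exfalso
        rcases Finset.mem_union.mp hxD with hx3 | hx3
        · exact hbA (Finset.mem_sdiff.mp hx3).1
        · exact (Finset.mem_erase.mp hx3).1 rfl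
      · obtain ⟨hxA, hxQ⟩ := Finset.mem_inter.mp hx''
        rcases Finset.mem_union.mp hxD with hx3 | hx3
        · exact absurd hxQ (Finset.mem_sdiff.mp hx3).2
        · exact Finset.mem_inter.mpr ⟨hxA, Finset.mem_of_mem_erase hx3⟩
    have key : ∑ x ∈ insert b (A v ∩ Q i₁), wt x
          + ∑ x ∈ (A v \ Q i₁) ∪ (A u).erase b, wt x
        ≤ ∑ x ∈ A v, wt x + ∑ x ∈ A u, wt x := by
      calc ∑ x ∈ insert b (A v ∩ Q i₁), wt x
            + ∑ x ∈ (A v \ Q i₁) ∪ (A u).erase b, wt x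
          = ∑ x ∈ insert b (A v ∩ Q i₁) ∪ ((A v \ Q i₁) ∪ (A u).erase b), wt x
            + ∑ x ∈ insert b (A v ∩ Q i₁) ∩ ((A v \ Q i₁) ∪ (A u).erase b), wt x :=
          Finset.sum_union_inter.symm
        _ ≤ ∑ x ∈ A v ∪ A u, wt x + ∑ x ∈ A v ∩ A u, wt x :=
          add_le_add
            (Finset.sum_le_sum_of_subset_of_nonneg hCD_u (fun x _ _ => hwt0 x))
            (Finset.sum_le_sum_of_subset_of_nonneg hCD_i (fun x _ _ => hwt0 x))
        _ = ∑ x ∈ A v, wt x + ∑ x ∈ A u, wt x := Finset.sum_union_inter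
    linarith
  -- the code: extend f by a parity-check coordinate
  set ext : (Fin (m - 1) → ZMod k) → (Fin m → ZMod k) := fun f i =>
    if h : (i : ℕ) = 0 then - ∑ j, f j
    else f ⟨(i : ℕ) - 1, by have := i.2; omega⟩ with hextdef
  set emb : Fin (m - 1) → Fin m := fun j => ⟨j.1 + 1, by have := j.2; omega⟩ with hembdef
  have hzero : ∀ f, ext f i0 = - ∑ j, f j := by
    intro f
    simp only [hextdef, hi0def]
    simp
  have hsucc : ∀ f (j : Fin (m - 1)), ext f (emb j) = f j := by
    intro f j
    have h1 : ((emb j : Fin m) : ℕ) ≠ 0 := by simp [hembdef]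
    simp only [hextdef]
    rw [dif_neg h1]
    exact congrArg f (Fin.ext (by simp [hembdef]))
  have hemb_lt : ∀ j j' : Fin (m - 1), j < j' → emb j < emb j' := by
    intro j j' h
    simp only [hembdef, Fin.lt_def] at h ⊢
    omega
  have hext_two : ∀ f g, f ≠ g → ∃ i₁ i₂ : Fin m, i₁ < i₂ ∧
      ext f i₁ ≠ ext g i₁ ∧ ext f i₂ ≠ ext g i₂ := by
    intro f g hfg
    obtain ⟨j₀, hj₀⟩ := Function.ne_iff.mp hfg
    by_cases hall : ∀ j, f j ≠ g j → j = j₀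
    · have hsum : ∑ j, f j ≠ ∑ j, g j := by
        intro hs
        apply hj₀
        have h1 : f j₀ + ∑ j ∈ Finset.univ.erase j₀, f j = ∑ j, f j :=
          Finset.add_sum_erase _ f (Finset.mem_univ j₀)
        have h2 : g j₀ + ∑ j ∈ Finset.univ.erase j₀, g j = ∑ j, g j :=
          Finset.add_sum_erase _ g (Finset.mem_univ j₀)
        have h3 : ∑ j ∈ Finset.univ.erase j₀, f j = ∑ j ∈ Finset.univ.erase j₀, g j :=
          Finset.sum_congr rfl (fun j hj => by
            by_contra hne
            exact (Finset.mem_erase.mp hj).1 (hall j hne))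
        rw [← h1, ← h2, h3] at hs
        exact add_right_cancel hs
      refine ⟨i0, emb j₀, ?_, ?_, ?_⟩
      · simp only [hi0def, hembdef, Fin.lt_def]
        omega
      · rw [hzero, hzero]
        exact fun h => hsum (neg_injective h)
      · rw [hsucc, hsucc]
        exact hj₀
    · push_neg at hall
      obtain ⟨j₁, hj₁ne, hj₁⟩ := hall
      rcases lt_or_gt_of_ne hj₁ with h | h
      · exact ⟨emb j₁, emb j₀, hemb_lt _ _ h,
          by rw [hsucc, hsucc]; exact hj₁ne, by rw [hsucc, hsucc]; exact hj₀⟩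
      · exact ⟨emb j₀, emb j₁, hemb_lt _ _ h,
          by rw [hsucc, hsucc]; exact hj₀, by rw [hsucc, hsucc]; exact hj₁ne⟩
  -- build the injection
  have hchoice : ∀ f : Fin (m - 1) → ZMod k, ∃ t, ¬ V t (A (ext f)) := by
    intro f
    by_contra hcon
    push_neg at hcon
    exact hlose (ext f) ((hrep _).mpr hcon)
  have hFinj : Function.Injective (fun f => (hchoice f).choose) := by
    intro f g hFe
    by_contra hfg
    obtain ⟨i₁, i₂, h12, hne1, hne2⟩ := hext_two f g hfg
    refine hpair (ext f) (ext g) i₁ i₂ h12 hne1 hne2 ((hchoice f).choose)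
      ((hchoice f).choose_spec) ?_
    rw [show (hchoice f).choose = (hchoice g).choose from hFe]
    exact (hchoice g).choose_spec
  have hcard := Fintype.card_le_of_injective _ hFinj
  rwa [Fintype.card_fun, Fintype.card_fin, Fintype.card_fin, ZMod.card] at hcard
end

section
/- For fixed k ≥ 2, there exists a sequence of complete simple games G_m on n_m = k + 2k(m−1) players whose dimension grows exponentially in the number of players: dim(G_m) ≥ k^{m−1} = k^{(n_m − k)/(2k)}. -/
open Finset

namespace ExpDim

variable {k r : ℕ}

abbrev P (k r : ℕ) := Fin k ⊕ (Fin r × Fin k × Bool)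

def rank : P k r → ℕ
  | .inl _ => 0
  | .inr x => x.1.1 + 1

lemma rank_le_r (p : P k r) : rank p ≤ r := by
  rcases p with a | ⟨j, c, b⟩
  · exact Nat.zero_le _
  · exact j.isLt

def Wp (X : Finset (P k r)) : Prop :=
  ∃ t : ℕ, 2 * (t + 1) ≤ (X.filter (fun p => rank p ≤ t)).card

lemma Wp_mono {X Y : Finset (P k r)} (h : X ⊆ Y) (hX : Wp X) : Wp Y := by
  obtain ⟨t, ht⟩ := hX
  exact ⟨t, ht.trans (card_le_card (filter_subset_filter _ h))⟩

lemma Wp_win {X C : Finset (P k r)} {t : ℕ} (hCX : C ⊆ X)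
    (hrk : ∀ p ∈ C, rank p ≤ t) (hcard : 2 * (t + 1) ≤ C.card) : Wp X := by
  refine ⟨t, hcard.trans (card_le_card ?_)⟩
  intro p hp
  exact mem_filter.mpr ⟨hCX hp, hrk p hp⟩

lemma Wp_desir {i j : P k r} (hij : rank i ≤ rank j) {X : Finset (P k r)}
    (hi : i ∉ X) (hj : j ∉ X) (h : Wp (insert j X)) : Wp (insert i X) := by
  obtain ⟨t, ht⟩ := h
  by_cases hjt : rank j ≤ t
  · refine ⟨t, ?_⟩
    rw [filter_insert, if_pos hjt,
      card_insert_of_notMem (fun hc => hj (mem_filter.mp hc).1)] at ht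
    rw [filter_insert, if_pos (hij.trans hjt),
      card_insert_of_notMem (fun hc => hi (mem_filter.mp hc).1)]
    exact ht
  · rw [filter_insert, if_neg hjt] at ht
    exact ⟨t, ht.trans (card_le_card (filter_subset_filter _ (subset_insert _ _)))⟩

def pairF (j : Fin r) (c : Fin k) : Finset (P k r) :=
  {Sum.inr (j, c, false), Sum.inr (j, c, true)}

lemma mem_pairF {p : P k r} {j : Fin r} {c : Fin k} :
    p ∈ pairF j c ↔ ∃ b : Bool, p = Sum.inr (j, c, b) := by
  simp only [pairF, mem_insert, mem_singleton, Bool.exists_bool]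

lemma card_pairF (j : Fin r) (c : Fin k) : (pairF j c).card = 2 :=
  card_pair (by simp)

lemma pairF_disj {j j' : Fin r} {c c' : Fin k} (h : j ≠ j') :
    Disjoint (pairF j c) (pairF j' c') := by
  rw [disjoint_left]
  intro p hp hp'
  rw [mem_pairF] at hp hp'
  obtain ⟨b, rfl⟩ := hp
  obtain ⟨b', hb⟩ := hp'
  simp only [Sum.inr.injEq, Prod.mk.injEq] at hb
  exact h hb.1

def Sv (v : Fin r → Fin k) (s : Finset (Fin r)) : Finset (P k r) :=
  s.biUnion fun j => pairF j (v j)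

lemma mem_Sv {v : Fin r → Fin k} {s : Finset (Fin r)} {p : P k r} :
    p ∈ Sv v s ↔ ∃ j ∈ s, ∃ b : Bool, p = Sum.inr (j, v j, b) := by
  simp only [Sv, mem_biUnion, mem_pairF]

lemma card_Sv {v : Fin r → Fin k} {s : Finset (Fin r)} :
    (Sv v s).card = 2 * s.card := by
  rw [Sv, card_biUnion (fun x _ y _ hxy => pairF_disj hxy)]
  simp only [card_pairF, sum_const, smul_eq_mul, mul_comm]

lemma Sv_mono {v : Fin r → Fin k} {s s' : Finset (Fin r)} (h : s ⊆ s') :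
    Sv v s ⊆ Sv v s' := by
  intro p hp
  rw [mem_Sv] at hp ⊢
  obtain ⟨j, hj, b, rfl⟩ := hp
  exact ⟨j, h hj, b, rfl⟩

def av (hk : 0 < k) (v : Fin r → Fin k) : Fin k :=
  ⟨(∑ j, (v j : ℕ)) % k, Nat.mod_lt _ hk⟩

def L (hk : 0 < k) (v : Fin r → Fin k) : Finset (P k r) :=
  insert (Sum.inl (av hk v)) (Sv v univ)

lemma Sv_subset_L {hk : 0 < k} {v : Fin r → Fin k} {s : Finset (Fin r)} :
    Sv v s ⊆ L hk v :=
  fun p hp => mem_insert_of_mem (Sv_mono (subset_univ s) hp)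

lemma mem_L_pair {hk : 0 < k} {v : Fin r → Fin k} (j : Fin r) (b : Bool) :
    Sum.inr (j, v j, b) ∈ L hk v :=
  Sv_subset_L (s := {j}) (mem_Sv.mpr ⟨j, mem_singleton_self j, b, rfl⟩)

lemma card_filter_fin_lt (t : ℕ) :
    (univ.filter fun j : Fin r => (j : ℕ) < t).card ≤ t := by
  calc (univ.filter fun j : Fin r => (j : ℕ) < t).card
      ≤ (Finset.range t).card := by
        apply card_le_card_of_injOn (fun j : Fin r => (j : ℕ))
        · intro a ha
          simp only [mem_coe, mem_filter] at ha
          exact mem_range.mpr ha.2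
        · exact fun a _ b _ h => Fin.val_injective h
    _ = t := card_range t

lemma card_filter_fin_le (j0 : Fin r) :
    (j0 : ℕ) + 1 ≤ (univ.filter fun j : Fin r => (j : ℕ) ≤ (j0 : ℕ)).card := by
  have hsub : Finset.range ((j0 : ℕ) + 1) ⊆
      (univ.filter fun j : Fin r => (j : ℕ) ≤ (j0 : ℕ)).image (fun j : Fin r => (j : ℕ)) := by
    intro i hi
    rw [mem_range] at hi
    have hir : i < r := lt_of_lt_of_le hi j0.isLt
    simp only [mem_image, mem_filter, mem_univ, true_and]
    exact ⟨⟨i, hir⟩, by simpa using Nat.lt_succ_iff.mp hi, rfl⟩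
  calc (j0 : ℕ) + 1 = (Finset.range ((j0 : ℕ) + 1)).card := (card_range _).symm
    _ ≤ _ := card_le_card hsub
    _ ≤ _ := card_image_le

lemma L_not_Wp (hk : 0 < k) (v : Fin r → Fin k) : ¬ Wp (L hk v) := by
  rintro ⟨t, ht⟩
  have hsub : (L hk v).filter (fun p => rank p ≤ t) ⊆
      insert (Sum.inl (av hk v)) (Sv v (univ.filter fun j : Fin r => (j : ℕ) < t)) := by
    intro p hp
    rw [mem_filter] at hp
    obtain ⟨hpL, hpt⟩ := hp
    rw [L, mem_insert] at hpL
    rcases hpL with h | h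
    · exact h ▸ mem_insert_self _ _
    · rw [mem_Sv] at h
      obtain ⟨j, -, b, rfl⟩ := h
      simp only [rank] at hpt
      refine mem_insert_of_mem (mem_Sv.mpr ⟨j, ?_, b, rfl⟩)
      simp only [mem_filter, mem_univ, true_and]
      omega
  have h1 := (card_le_card hsub).trans (card_insert_le _ _)
  rw [card_Sv] at h1
  have h2 := card_filter_fin_lt (r := r) t
  omega


@[simp] lemma rank_inl (a : Fin k) : rank (Sum.inl a : P k r) = 0 := rfl
@[simp] lemma rank_inr (x : Fin r × Fin k × Bool) :
    rank (Sum.inr x : P k r) = x.1.1 + 1 := rfl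

lemma av_ne (hk : 0 < k) {v w : Fin r → Fin k} (j0 : Fin r)
    (hone : ∀ j, j ≠ j0 → v j = w j) (hj0 : v j0 ≠ w j0) :
    av hk v ≠ av hk w := by
  intro h
  apply hj0
  have hs : ∑ j ∈ univ.erase j0, (v j : ℕ) = ∑ j ∈ univ.erase j0, (w j : ℕ) :=
    Finset.sum_congr rfl (fun j hj => by rw [hone j (mem_erase.mp hj).1])
  have h1 : (v j0 : ℕ) + ∑ j ∈ univ.erase j0, (v j : ℕ) = ∑ j, (v j : ℕ) :=
    Finset.add_sum_erase univ (fun j => (v j : ℕ)) (mem_univ j0)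
  have h2 : (w j0 : ℕ) + ∑ j ∈ univ.erase j0, (w j : ℕ) = ∑ j, (w j : ℕ) :=
    Finset.add_sum_erase univ (fun j => (w j : ℕ)) (mem_univ j0)
  have hmod : (∑ j, (v j : ℕ)) % k = (∑ j, (w j : ℕ)) % k := by
    have := congrArg Fin.val h
    simpa [av] using this
  have hme : (v j0 : ℕ) ≡ (w j0 : ℕ) [MOD k] := by
    apply Nat.ModEq.add_right_cancel' (∑ j ∈ univ.erase j0, (v j : ℕ))
    rw [Nat.ModEq, h1, hs, h2]
    exact hmod
  have hval : (v j0 : ℕ) = (w j0 : ℕ) := by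
    rw [Nat.ModEq, Nat.mod_eq_of_lt (v j0).isLt, Nat.mod_eq_of_lt (w j0).isLt] at hme
    exact hme
  exact Fin.ext hval

lemma case1 (hk : 0 < k) {v w : Fin r → Fin k} (hav : av hk v ≠ av hk w)
    (j0 : Fin r) (hj0 : v j0 ≠ w j0) :
    ∃ A B : Finset (P k r), Wp A ∧ Wp B ∧ A ∪ B ⊆ L hk v ∪ L hk w ∧
      A ∩ B ⊆ L hk v ∩ L hk w := by
  refine ⟨{Sum.inl (av hk v), Sum.inl (av hk w)}, Sv v univ ∪ Sv w univ, ?_, ?_, ?_, ?_⟩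
  · apply Wp_win (t := 0) (Finset.Subset.refl _)
    · intro p hp
      rcases mem_insert.mp hp with rfl | hp
      · simp
      · rw [mem_singleton] at hp; subst hp; simp
    · rw [card_pair (by simpa using hav)]
  · apply Wp_win (t := (j0 : ℕ) + 1)
      (C := Sv v (univ.filter fun j : Fin r => (j : ℕ) ≤ (j0 : ℕ)) ∪ pairF j0 (w j0))
    · apply union_subset
      · exact (Sv_mono (filter_subset _ _)).trans subset_union_left
      · intro p hp
        apply mem_union_right
        rw [mem_pairF] at hp
        obtain ⟨b, rfl⟩ := hp
        exact mem_Sv.mpr ⟨j0, mem_univ _, b, rfl⟩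
    · intro p hp
      rcases mem_union.mp hp with hp | hp
      · rw [mem_Sv] at hp
        obtain ⟨j, hj, b, rfl⟩ := hp
        simp only [mem_filter, mem_univ, true_and] at hj
        simp only [rank_inr]
        omega
      · rw [mem_pairF] at hp
        obtain ⟨b, rfl⟩ := hp
        simp
    · rw [card_union_of_disjoint, card_Sv, card_pairF]
      · have := card_filter_fin_le j0; omega
      · rw [disjoint_left]
        intro p hp hp'
        rw [mem_Sv] at hp
        rw [mem_pairF] at hp'
        obtain ⟨j, hj, b, rfl⟩ := hp
        obtain ⟨b', hb⟩ := hp'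
        simp only [Sum.inr.injEq, Prod.mk.injEq] at hb
        obtain ⟨rfl, h2, -⟩ := hb
        exact hj0 h2
  · apply union_subset
    · intro p hp
      rcases mem_insert.mp hp with rfl | hp
      · exact mem_union_left _ (mem_insert_self _ _)
      · rw [mem_singleton] at hp; subst hp
        exact mem_union_right _ (mem_insert_self _ _)
    · apply union_subset
      · exact Sv_subset_L.trans subset_union_left
      · exact Sv_subset_L.trans subset_union_right
  · intro p hp
    obtain ⟨hpA, hpB⟩ := mem_inter.mp hp
    exfalso
    have hinr : ∀ q ∈ Sv v univ ∪ Sv w univ, ∃ x, q = Sum.inr x := by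
      intro q hq
      rcases mem_union.mp hq with h | h <;>
        · rw [mem_Sv] at h
          obtain ⟨j, -, b, rfl⟩ := h
          exact ⟨_, rfl⟩
    obtain ⟨x, hx⟩ := hinr p hpB
    rcases mem_insert.mp hpA with rfl | hpA'
    · simp at hx
    · rw [mem_singleton] at hpA'; subst hpA'; simp at hx

lemma case2 (hk : 0 < k) {v w : Fin r → Fin k} (hav : av hk v = av hk w)
    {j1 j2 : Fin r} (hj1 : v j1 ≠ w j1) (hj2 : v j2 ≠ w j2) (hne : j2 ≠ j1)
    (hlt : ∀ j : Fin r, (j : ℕ) < (j1 : ℕ) → v j = w j) :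
    ∃ A B : Finset (P k r), Wp A ∧ Wp B ∧ A ∪ B ⊆ L hk v ∪ L hk w ∧
      A ∩ B ⊆ L hk v ∩ L hk w := by
  have hr : 0 < r := j1.pos
  have hnm1 : (Sum.inl (av hk v) : P k r) ∉
      Sv v (univ.filter fun j : Fin r => (j : ℕ) ≤ (j1 : ℕ)) := by
    rw [mem_Sv]; rintro ⟨j, -, b, h⟩; simp at h
  have hnm2 : (Sum.inr (j1, w j1, false) : P k r) ∉
      insert (Sum.inl (av hk v)) (Sv v (univ.filter fun j : Fin r => (j : ℕ) ≤ (j1 : ℕ))) := by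
    rw [mem_insert, mem_Sv]
    rintro (h | ⟨j, -, b, h⟩)
    · simp at h
    · simp only [Sum.inr.injEq, Prod.mk.injEq] at h
      obtain ⟨rfl, h2, -⟩ := h
      exact hj1 h2.symm
  have hnm3 : (Sum.inl (av hk v) : P k r) ∉ Sv v (univ.erase j1) ∪ Sv w {j2} := by
    rw [mem_union, mem_Sv, mem_Sv]
    rintro (⟨j, -, b, h⟩ | ⟨j, -, b, h⟩) <;> simp at h
  have hnm4 : (Sum.inr (j1, w j1, true) : P k r) ∉
      insert (Sum.inl (av hk v)) (Sv v (univ.erase j1) ∪ Sv w {j2}) := by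
    rw [mem_insert, mem_union, mem_Sv, mem_Sv]
    rintro (h | ⟨j, hj, b, h⟩ | ⟨j, hj, b, h⟩)
    · simp at h
    · simp only [Sum.inr.injEq, Prod.mk.injEq] at h
      exact (mem_erase.mp hj).1 h.1.symm
    · rw [mem_singleton] at hj; subst hj
      simp only [Sum.inr.injEq, Prod.mk.injEq] at h
      exact hne h.1.symm
  have hdisj : Disjoint (Sv v (univ.erase j1)) (Sv w ({j2} : Finset (Fin r))) := by
    rw [disjoint_left]
    intro p hp hp'
    rw [mem_Sv] at hp hp'
    obtain ⟨j, -, b, rfl⟩ := hp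
    obtain ⟨j', hj', b', hb⟩ := hp'
    rw [mem_singleton] at hj'; subst hj'
    simp only [Sum.inr.injEq, Prod.mk.injEq] at hb
    obtain ⟨rfl, h2, -⟩ := hb
    exact hj2 h2
  refine ⟨insert (Sum.inr (j1, w j1, false))
      (insert (Sum.inl (av hk v)) (Sv v (univ.filter fun j : Fin r => (j : ℕ) ≤ (j1 : ℕ)))),
    insert (Sum.inr (j1, w j1, true))
      (insert (Sum.inl (av hk v)) (Sv v (univ.erase j1) ∪ Sv w {j2})), ?_, ?_, ?_, ?_⟩
  · apply Wp_win (t := (j1 : ℕ) + 1) (Finset.Subset.refl _)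
    · intro p hp
      rcases mem_insert.mp hp with rfl | hp
      · simp
      · rcases mem_insert.mp hp with rfl | hp
        · simp
        · rw [mem_Sv] at hp
          obtain ⟨j, hj, b, rfl⟩ := hp
          simp only [mem_filter, mem_univ, true_and] at hj
          simp only [rank_inr]
          omega
    · rw [card_insert_of_notMem hnm2, card_insert_of_notMem hnm1, card_Sv]
      have := card_filter_fin_le j1; omega
  · apply Wp_win (t := r) (Finset.Subset.refl _)
    · exact fun p _ => rank_le_r p
    · rw [card_insert_of_notMem hnm4, card_insert_of_notMem hnm3,
        card_union_of_disjoint hdisj, card_Sv, card_Sv,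
        card_erase_of_mem (mem_univ _), card_singleton]
      simp only [card_univ, Fintype.card_fin]
      omega
  · apply union_subset
    · intro p hp
      rcases mem_insert.mp hp with rfl | hp
      · exact mem_union_right _ (mem_L_pair j1 false)
      · rcases mem_insert.mp hp with rfl | hp
        · exact mem_union_left _ (mem_insert_self _ _)
        · exact mem_union_left _ (Sv_subset_L hp)
    · intro p hp
      rcases mem_insert.mp hp with rfl | hp
      · exact mem_union_right _ (mem_L_pair j1 true)
      · rcases mem_insert.mp hp with rfl | hp
        · exact mem_union_left _ (mem_insert_self _ _)
        · rcases mem_union.mp hp with h | h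
          · exact mem_union_left _ (Sv_subset_L h)
          · exact mem_union_right _ (Sv_subset_L h)
  · intro p hp
    obtain ⟨hpA, hpB⟩ := mem_inter.mp hp
    rcases mem_insert.mp hpA with rfl | hpA'
    · exfalso
      rcases mem_insert.mp hpB with h | hpB'
      · simp at h
      · rcases mem_insert.mp hpB' with h | hpB''
        · simp at h
        · rcases mem_union.mp hpB'' with h | h
          · rw [mem_Sv] at h
            obtain ⟨j, hj, b, hb⟩ := h
            simp only [Sum.inr.injEq, Prod.mk.injEq] at hb
            exact (mem_erase.mp hj).1 hb.1.symm
          · rw [mem_Sv] at h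
            obtain ⟨j, hj, b, hb⟩ := h
            rw [mem_singleton] at hj; subst hj
            simp only [Sum.inr.injEq, Prod.mk.injEq] at hb
            exact hne hb.1.symm
    · rcases mem_insert.mp hpA' with rfl | hpA''
      · refine mem_inter.mpr ⟨mem_insert_self _ _, ?_⟩
        rw [hav]
        exact mem_insert_self _ _
      · rw [mem_Sv] at hpA''
        obtain ⟨j, hjle, b, rfl⟩ := hpA''
        simp only [mem_filter, mem_univ, true_and] at hjle
        have hjne : j ≠ j1 := by
          intro h
          subst h
          rcases mem_insert.mp hpB with h | hpB'
          · simp only [Sum.inr.injEq, Prod.mk.injEq] at h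
            exact hj1 h.2.1
          · rcases mem_insert.mp hpB' with h | hpB''
            · simp at h
            · rcases mem_union.mp hpB'' with h | h
              · rw [mem_Sv] at h
                obtain ⟨j', hj', b', hb⟩ := h
                simp only [Sum.inr.injEq, Prod.mk.injEq] at hb
                exact (mem_erase.mp hj').1 hb.1.symm
              · rw [mem_Sv] at h
                obtain ⟨j', hj', b', hb⟩ := h
                rw [mem_singleton] at hj'; subst hj'
                simp only [Sum.inr.injEq, Prod.mk.injEq] at hb
                obtain ⟨h1', h2', -⟩ := hb
                subst h1'
                exact hj2 h2'
        have hjlt : (j : ℕ) < (j1 : ℕ) :=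
          lt_of_le_of_ne hjle (fun hh => hjne (Fin.ext hh))
        have hcomm := hlt j hjlt
        refine mem_inter.mpr ⟨mem_L_pair j b, ?_⟩
        rw [hcomm]
        exact mem_L_pair j b

lemma split (hk : 0 < k) {v w : Fin r → Fin k} (hvw : v ≠ w) :
    ∃ A B : Finset (P k r), Wp A ∧ Wp B ∧ A ∪ B ⊆ L hk v ∪ L hk w ∧
      A ∩ B ⊆ L hk v ∩ L hk w := by
  obtain ⟨j0, hj0⟩ := Function.ne_iff.mp hvw
  by_cases hav : av hk v = av hk w
  · have h2 : ∃ j2, j2 ≠ j0 ∧ v j2 ≠ w j2 := by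
      by_contra h
      push_neg at h
      exact av_ne hk j0 (fun j hj => h j hj) hj0 hav
    obtain ⟨j2', hj2'ne, hj2'⟩ := h2
    have hD : (univ.filter fun j : Fin r => v j ≠ w j).Nonempty :=
      ⟨j0, mem_filter.mpr ⟨mem_univ _, hj0⟩⟩
    set j1 := (univ.filter fun j : Fin r => v j ≠ w j).min' hD with hj1def
    have hj1mem : v j1 ≠ w j1 := by
      have := Finset.min'_mem _ hD
      exact (mem_filter.mp this).2
    have hlt : ∀ j : Fin r, (j : ℕ) < (j1 : ℕ) → v j = w j := by
      intro j hj
      by_contra hne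
      have hle := Finset.min'_le (univ.filter fun j : Fin r => v j ≠ w j) j (mem_filter.mpr ⟨mem_univ _, hne⟩)
      have : (j1 : ℕ) ≤ (j : ℕ) := Fin.le_def.mp hle
      omega
    by_cases hc : j0 = j1
    · exact case2 hk hav hj1mem hj2' (hc ▸ hj2'ne) hlt
    · exact case2 hk hav hj1mem hj0 hc hlt
  · exact case1 hk hav j0 hj0


end ExpDim

open Finset ExpDim in
theorem ExpDim.master (k : ℕ) (hk : 2 ≤ k) (r : ℕ) :
    ∃ W : Finset (Fin (k + 2 * k * r)) → Prop,
      (∀ X Y : Finset (Fin (k + 2 * k * r)), X ⊆ Y → W X → W Y) ∧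
      (∀ i j : Fin (k + 2 * k * r),
        (∀ X : Finset (Fin (k + 2 * k * r)), i ∉ X → j ∉ X →
            W (insert j X) → W (insert i X)) ∨
        (∀ X : Finset (Fin (k + 2 * k * r)), i ∉ X → j ∉ X →
            W (insert i X) → W (insert j X))) ∧
      (∀ (n : ℕ) (V : Fin n → Finset (Fin (k + 2 * k * r)) → Prop),
        (∀ t, IsWeighted (V t)) →
        (∀ X, W X ↔ ∀ t, V t X) →
        k ^ r ≤ n) := by
  classical
  have hk0 : 0 < k := by omega
  have hcard : Fintype.card (Fin (k + 2 * k * r)) = Fintype.card (P k r) := by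
    simp [P]
    ring
  let e : Fin (k + 2 * k * r) ≃ P k r := Fintype.equivOfCardEq hcard
  refine ⟨fun X => Wp (X.map e.toEmbedding), ?_, ?_, ?_⟩
  · intro X Y h hX
    exact Wp_mono (Finset.map_subset_map.mpr h) hX
  · intro i j
    rcases le_total (rank (e i)) (rank (e j)) with h | h
    · left
      intro X hi hj hW
      rw [Finset.map_insert] at hW ⊢
      exact Wp_desir h (fun hc => hi ((Finset.mem_map' _).mp hc))
        (fun hc => hj ((Finset.mem_map' _).mp hc)) hW
    · right
      intro X hi hj hW
      rw [Finset.map_insert] at hW ⊢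
      exact Wp_desir h (fun hc => hj ((Finset.mem_map' _).mp hc))
        (fun hc => hi ((Finset.mem_map' _).mp hc)) hW
  · intro n V hV hrep
    have map_unmap : ∀ Y : Finset (P k r),
        (Y.map e.symm.toEmbedding).map e.toEmbedding = Y := by
      intro Y
      ext p
      simp only [Finset.mem_map, Equiv.coe_toEmbedding]
      constructor
      · rintro ⟨a, ⟨b, hb, rfl⟩, rfl⟩
        simpa using hb
      · intro hp
        exact ⟨e.symm p, ⟨p, hp, rfl⟩, by simp⟩
    have hW_of : ∀ Y : Finset (P k r), Wp Y ↔ ∀ t, V t (Y.map e.symm.toEmbedding) := by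
      intro Y
      have h := hrep (Y.map e.symm.toEmbedding)
      simp only [map_unmap Y] at h
      exact h
    have key : ∀ v : Fin r → Fin k, ∃ t, ¬ V t ((L hk0 v).map e.symm.toEmbedding) := by
      intro v
      by_contra hall
      push_neg at hall
      exact L_not_Wp hk0 v ((hW_of _).mpr hall)
    choose T hT using key
    have hinj : Function.Injective T := by
      intro v w hTvw
      by_contra hvw
      obtain ⟨A, B, hA, hB, hU, hI⟩ := ExpDim.split hk0 hvw
      obtain ⟨wt, q, hwt0, hq, hiff⟩ := hV (T v)
      have hsum : ∀ Y : Finset (P k r),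
          ∑ i ∈ Y.map e.symm.toEmbedding, wt i = ∑ p ∈ Y, wt (e.symm p) :=
        fun Y => Finset.sum_map Y e.symm.toEmbedding wt
      have hLv : ∑ p ∈ L hk0 v, wt (e.symm p) < q := by
        have h := hT v
        rw [hiff, hsum] at h
        exact lt_of_not_ge h
      have hLw : ∑ p ∈ L hk0 w, wt (e.symm p) < q := by
        have h := hT w
        rw [← hTvw, hiff, hsum] at h
        exact lt_of_not_ge h
      have hwin : ∀ {C : Finset (P k r)}, Wp C → q ≤ ∑ p ∈ C, wt (e.symm p) := by
        intro C hC
        have h := (hW_of C).mp hC (T v)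
        rw [hiff, hsum] at h
        exact h
      have h1 := hwin hA
      have h2 := hwin hB
      have hkey : ∑ p ∈ A, wt (e.symm p) + ∑ p ∈ B, wt (e.symm p) ≤
          ∑ p ∈ L hk0 v, wt (e.symm p) + ∑ p ∈ L hk0 w, wt (e.symm p) := by
        rw [← Finset.sum_union_inter (s₁ := A) (s₂ := B),
          ← Finset.sum_union_inter (s₁ := L hk0 v) (s₂ := L hk0 w)]
        apply add_le_add
        · exact Finset.sum_le_sum_of_subset_of_nonneg hU (fun p _ _ => hwt0 _)
        · exact Finset.sum_le_sum_of_subset_of_nonneg hI (fun p _ _ => hwt0 _)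
      linarith
    have := Fintype.card_le_of_injective T hinj
    simpa using this

/-- For fixed `k ≥ 2` there is a sequence of complete simple games `G_m` on
`n_m = k + 2k(m-1)` players whose dimension grows exponentially in the number
of players: `dim G_m ≥ k^(m-1)`. Here "complete" means the desirability
relation is total, and the dimension lower bound is expressed by saying that
any representation of `G_m` as an intersection of weighted games uses at least
`k^(m-1)` of them. -/
theorem complete_games_exponential_dimension (k : ℕ) (hk : 2 ≤ k) :
    ∀ m : ℕ, 2 ≤ m →
    ∃ W : Finset (Fin (k + 2 * k * (m - 1))) → Prop,
      -- `W` is monotone, hence a simple game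
      (∀ X Y : Finset (Fin (k + 2 * k * (m - 1))), X ⊆ Y → W X → W Y) ∧
      -- the game is complete: the desirability relation is total
      (∀ i j : Fin (k + 2 * k * (m - 1)),
        (∀ X : Finset (Fin (k + 2 * k * (m - 1))), i ∉ X → j ∉ X →
            W (insert j X) → W (insert i X)) ∨
        (∀ X : Finset (Fin (k + 2 * k * (m - 1))), i ∉ X → j ∉ X →
            W (insert i X) → W (insert j X))) ∧
      -- dimension at least `k^(m-1)`
      (∀ (n : ℕ) (V : Fin n → Finset (Fin (k + 2 * k * (m - 1))) → Prop),
        (∀ t, IsWeighted (V t)) →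
        (∀ X, W X ↔ ∀ t, V t X) →
        k ^ (m - 1) ≤ n) := by
  intro m _
  exact ExpDim.master k hk (m - 1)
end

section
/- The disjunctive hierarchical game H = H_∃(P, (2,5)) with P = P_1 ∪ P_2, |P_1| = 2, |P_2| = 5 (winning: at least 2 players from P_1, or at least 5 players in total) is not weighted, and it is the intersection of two weighted games; hence dim(H) = 2. -/
lemma sum_w {α : Type*} [DecidableEq α] (a b : α) (hab : a ≠ b) (x y : ℝ) (X : Finset α) :
    ∑ i ∈ X, (if i = a then 1 + x else if i = b then 1 + y else 1) =
      X.card + ((if a ∈ X then x else 0) + (if b ∈ X then y else 0)) := by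
  have h : ∀ i ∈ X, (if i = a then 1 + x else if i = b then 1 + y else 1)
      = 1 + ((if i = a then x else 0) + (if i = b then y else 0)) := by
    intro i _
    rcases eq_or_ne i a with rfl | h1
    · simp [hab]
    · rcases eq_or_ne i b with rfl | h2
      · simp [h1]
      · simp [h1, h2]
  rw [Finset.sum_congr rfl h, Finset.sum_add_distrib, Finset.sum_add_distrib,
    Finset.sum_const, Finset.sum_ite_eq', Finset.sum_ite_eq']
  simp

lemma nat_real_aux {n : ℕ} (h : (5:ℝ) ≤ (n:ℝ) + 0.1) : 5 ≤ n := by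
  by_contra hc
  push_neg at hc
  have : (n:ℝ) ≤ 4 := by exact_mod_cast Nat.le_of_lt_succ hc
  linarith

/-- The disjunctive hierarchical game `H_∃(P,(2,5))` with `|P₁| = 2`,
`|P₂| = 5` (winning: at least 2 players of `P₁`, or at least 5 players in
total) is not weighted, is the intersection of two weighted games, and hence
has dimension `2`. -/
theorem hexists25_dim_two {α : Type*} [Fintype α] [DecidableEq α]
    (P₁ P₂ : Finset α) (hdisj : Disjoint P₁ P₂) (hcover : P₁ ∪ P₂ = Finset.univ)
    (h₁ : P₁.card = 2) (h₂ : P₂.card = 5)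
    (W : Finset α → Prop)
    (hW : ∀ X : Finset α, W X ↔ 2 ≤ (X ∩ P₁).card ∨ 5 ≤ X.card) :
    ¬ IsWeighted W ∧
    (∃ V₁ V₂ : Finset α → Prop, IsWeighted V₁ ∧ IsWeighted V₂ ∧
      ∀ X : Finset α, W X ↔ V₁ X ∧ V₂ X) ∧
    sInf {n : ℕ | ∃ V : Fin n → Finset α → Prop,
      (∀ i, IsWeighted (V i)) ∧ ∀ X : Finset α, W X ↔ ∀ i, V i X} = 2 := by
  obtain ⟨a, b, hab, hP1⟩ := Finset.card_eq_two.mp h₁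
  have haP1 : a ∈ P₁ := by simp [hP1]
  have hbP1 : b ∈ P₁ := by simp [hP1]
  have haP2 : a ∉ P₂ := fun h => (Finset.disjoint_left.mp hdisj haP1) h
  have hbP2 : b ∉ P₂ := fun h => (Finset.disjoint_left.mp hdisj hbP1) h
  -- characterization of W
  have hcap : ∀ X : Finset α, (2 ≤ (X ∩ P₁).card ↔ a ∈ X ∧ b ∈ X) := by
    intro X
    rw [hP1]
    constructor
    · intro h
      have hsub : X ∩ ({a, b} : Finset α) ⊆ {a, b} := Finset.inter_subset_right
      have hcard2 : ({a, b} : Finset α).card = 2 := Finset.card_pair hab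
      have heq : X ∩ ({a, b} : Finset α) = {a, b} :=
        Finset.eq_of_subset_of_card_le hsub (by omega)
      have hsub2 : ({a, b} : Finset α) ⊆ X := Finset.inter_eq_right.mp heq
      exact ⟨hsub2 (by simp), hsub2 (by simp)⟩
    · rintro ⟨ha, hb⟩
      have : ({a, b} : Finset α) ⊆ X ∩ {a, b} := by
        intro x hx
        simp only [Finset.mem_insert, Finset.mem_singleton] at hx
        rcases hx with rfl | rfl <;> simp [ha, hb]
      calc 2 = ({a, b} : Finset α).card := (Finset.card_pair hab).symm
        _ ≤ (X ∩ {a, b}).card := Finset.card_le_card this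
  have hW' : ∀ X : Finset α, W X ↔ ((a ∈ X ∧ b ∈ X) ∨ 5 ≤ X.card) := by
    intro X; rw [hW, hcap]
  -- Part 1: not weighted
  have hNW : ¬ IsWeighted W := by
    rintro ⟨w, q, hw0, hq, hwq⟩
    obtain ⟨C, hCsub, hC2⟩ := Finset.exists_subset_card_eq (s := P₂) (n := 2) (by omega)
    have haC : a ∉ C := fun h => haP2 (hCsub h)
    have hbC : b ∉ C := fun h => hbP2 (hCsub h)
    have haD : a ∉ P₂ \ C := fun h => haP2 (Finset.mem_sdiff.mp h).1
    have hbD : b ∉ P₂ \ C := fun h => hbP2 (Finset.mem_sdiff.mp h).1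
    have hDcard : (P₂ \ C).card = 3 := by rw [Finset.card_sdiff_of_subset hCsub]; omega
    -- winning coalitions
    have h1 : q ≤ ∑ i ∈ P₁, w i := (hwq P₁).mp ((hW' P₁).mpr (Or.inl ⟨haP1, hbP1⟩))
    have h2' : q ≤ ∑ i ∈ P₂, w i := (hwq P₂).mp ((hW' P₂).mpr (Or.inr (by omega)))
    -- losing coalitions
    have hA : ¬ W (insert a C) := by
      rw [hW']
      push_neg
      constructor
      · intro _ hb'
        rcases Finset.mem_insert.mp hb' with h' | h'
        · exact hab h'.symm
        · exact hbC h'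
      · rw [Finset.card_insert_of_notMem haC]; omega
    have hB : ¬ W (insert b (P₂ \ C)) := by
      rw [hW']
      push_neg
      constructor
      · intro ha' _
        rcases Finset.mem_insert.mp ha' with h' | h'
        · exact hab h'
        · exact haD h'
      · rw [Finset.card_insert_of_notMem hbD]; omega
    have hA' : ∑ i ∈ insert a C, w i < q := by
      by_contra hc; push_neg at hc; exact hA ((hwq _).mpr hc)
    have hB' : ∑ i ∈ insert b (P₂ \ C), w i < q := by
      by_contra hc; push_neg at hc; exact hB ((hwq _).mpr hc)
    rw [Finset.sum_insert haC] at hA'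
    rw [Finset.sum_insert hbD] at hB'
    have hsplit : ∑ i ∈ P₂ \ C, w i + ∑ i ∈ C, w i = ∑ i ∈ P₂, w i :=
      Finset.sum_sdiff hCsub
    have hP1sum : ∑ i ∈ P₁, w i = w a + w b := by
      rw [hP1, Finset.sum_pair hab]
    linarith
  -- Part 2: intersection of two weighted games
  have hpair : ∃ V₁ V₂ : Finset α → Prop, IsWeighted V₁ ∧ IsWeighted V₂ ∧
      ∀ X : Finset α, W X ↔ V₁ X ∧ V₂ X := by
    set w₁ : α → ℝ := fun i => if i = a then 1 + 3 else if i = b then 1 + 0.1 else 1 with hw₁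
    set w₂ : α → ℝ := fun i => if i = a then 1 + 0.1 else if i = b then 1 + 3 else 1 with hw₂
    refine ⟨fun X => (5:ℝ) ≤ ∑ i ∈ X, w₁ i, fun X => (5:ℝ) ≤ ∑ i ∈ X, w₂ i,
      ⟨w₁, 5, ?_, by norm_num, fun _ => Iff.rfl⟩,
      ⟨w₂, 5, ?_, by norm_num, fun _ => Iff.rfl⟩, ?_⟩
    · intro i; simp only [hw₁]; split_ifs <;> norm_num
    · intro i; simp only [hw₂]; split_ifs <;> norm_num
    · intro X
      rw [hW']
      have hs1 := sum_w a b hab 3 0.1 X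
      have hs2 := sum_w a b hab 0.1 3 X
      simp only [hw₁, hw₂]
      rw [hs1, hs2]
      by_cases ha : a ∈ X <;> by_cases hb : b ∈ X
      · -- both in X
        simp only [if_pos ha, if_pos hb]
        have h2 : (2:ℕ) ≤ X.card := by
          calc 2 = ({a, b} : Finset α).card := (Finset.card_pair hab).symm
            _ ≤ X.card := Finset.card_le_card (by
                intro x hx
                simp only [Finset.mem_insert, Finset.mem_singleton] at hx
                rcases hx with rfl | rfl <;> assumption)
        have h2' : (2:ℝ) ≤ X.card := by exact_mod_cast h2
        constructor
        · intro _; constructor <;> linarith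
        · intro _; exact Or.inl ⟨ha, hb⟩
      · -- a only
        simp only [if_pos ha, if_neg hb]
        constructor
        · rintro (⟨_, hb'⟩ | h5)
          · exact absurd hb' hb
          · have : (5:ℝ) ≤ X.card := by exact_mod_cast h5
            constructor <;> linarith
        · rintro ⟨_, h2⟩
          exact Or.inr (nat_real_aux (by linarith))
      · -- b only
        simp only [if_neg ha, if_pos hb]
        constructor
        · rintro (⟨ha', _⟩ | h5)
          · exact absurd ha' ha
          · have : (5:ℝ) ≤ X.card := by exact_mod_cast h5
            constructor <;> linarith
        · rintro ⟨h1', _⟩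
          exact Or.inr (nat_real_aux (by linarith))
      · -- neither
        simp only [if_neg ha, if_neg hb]
        constructor
        · rintro (⟨ha', _⟩ | h5)
          · exact absurd ha' ha
          · have : (5:ℝ) ≤ X.card := by exact_mod_cast h5
            constructor <;> linarith
        · rintro ⟨h1', _⟩
          refine Or.inr ?_
          have : (5:ℝ) ≤ (X.card : ℝ) := by linarith
          exact_mod_cast this
  refine ⟨hNW, hpair, ?_⟩
  -- Part 3: dimension 2
  set S : Set ℕ := {n : ℕ | ∃ V : Fin n → Finset α → Prop,
      (∀ i, IsWeighted (V i)) ∧ ∀ X : Finset α, W X ↔ ∀ i, V i X} with hS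
  have h2mem : 2 ∈ S := by
    obtain ⟨V₁, V₂, hV₁, hV₂, hiff⟩ := hpair
    refine ⟨![V₁, V₂], ?_, ?_⟩
    · intro i; fin_cases i <;> simpa
    · intro X
      rw [hiff X]
      constructor
      · rintro ⟨p1, p2⟩ i; fin_cases i <;> simpa
      · intro h; exact ⟨h 0, h 1⟩
  have hlb : ∀ m ∈ S, 2 ≤ m := by
    rintro m ⟨V, hVw, hViff⟩
    by_contra hc
    push_neg at hc
    interval_cases m
    · -- m = 0 : everything wins, but ∅ loses
      have : W ∅ := (hViff ∅).mpr (fun i => Fin.elim0 i)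
      rw [hW'] at this
      rcases this with ⟨h, _⟩ | h
      · exact absurd h (by simp)
      · simp at h
    · -- m = 1 : W is weighted
      obtain ⟨w, q, hw0, hq, hwq⟩ := hVw 0
      exact hNW ⟨w, q, hw0, hq, fun X => by
        rw [hViff X, Fin.forall_fin_one, hwq X]⟩
  have hmem := Nat.sInf_mem (⟨2, h2mem⟩ : S.Nonempty)
  have hle := Nat.sInf_le h2mem
  have hge := hlb _ hmem
  omega
end

section
/- Let H be the conjunctive hierarchical game H_∀(P, k) with m parts satisfying k_1 ≤ n_1 and k_i < k_{i−1} + n_i for 2 ≤ i ≤ m, and no dummies (k_{m−1} < k_m). Then every shift-maximal losing coalition of H has model of the form {1^{a_1},...,i^{a_i},(i+1)^{n_{i+1}},...,m^{n_m}} for some i ∈ [m], where a_1 + ... + a_i = k_i − 1, a_i < n_i, and whenever a_t > 0 for t ≤ i, a_s = n_s for all s < t. -/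
/-- Characterization of shift-maximal losing coalitions of a conjunctive
hierarchical game `H_∀(P, k)` without dummies: each such coalition contains
all players of the parts after some index `i`, exactly `kᵢ - 1` players from
the first `i` parts, fewer than `nᵢ` players from part `i`, and its nonempty
parts among the first `i` are preceded only by full parts. -/
theorem shift_maximal_losing_model {α : Type*} [Fintype α] [DecidableEq α]
    (m : ℕ) (hm : 1 ≤ m)
    (P : Fin m → Finset α)
    (hdisj : ∀ i j : Fin m, i ≠ j → Disjoint (P i) (P j))
    (hcover : (Finset.univ : Finset (Fin m)).biUnion P = Finset.univ)
    (kk : Fin m → ℕ) (hpos : ∀ i, 0 < kk i)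
    (hmonok : ∀ i j : Fin m, i < j → kk i < kk j)
    (hk1 : kk ⟨0, hm⟩ ≤ (P ⟨0, hm⟩).card)
    (hki : ∀ i : Fin m, 1 ≤ (i : ℕ) →
      kk i < kk ⟨(i : ℕ) - 1, Nat.lt_of_le_of_lt (Nat.sub_le _ _) i.isLt⟩ + (P i).card)
    (cls : α → Fin m) (hcls : ∀ p : α, p ∈ P (cls p))
    (win : Finset α → Prop)
    (hwin : ∀ X : Finset α, win X ↔ ∀ i : Fin m,
      kk i ≤ (X ∩ (Finset.univ.filter (· ≤ i)).biUnion P).card)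
    (Y : Finset α)
    -- `Y` is losing
    (hlose : ¬ win Y)
    -- adding any player makes `Y` winning
    (hadd : ∀ p ∉ Y, win (insert p Y))
    -- replacing any player of `Y` by a strictly more desirable one makes it winning
    (hshift : ∀ p ∈ Y, ∀ q, q ∉ Y → cls q < cls p → win (insert q (Y.erase p))) :
    ∃ i : Fin m,
      (∀ j : Fin m, i < j → Y ∩ P j = P j) ∧
      (∑ j ∈ Finset.univ.filter (· ≤ i), (Y ∩ P j).card) = kk i - 1 ∧
      (Y ∩ P i).card < (P i).card ∧
      (∀ t s : Fin m, s < t → t ≤ i → 0 < (Y ∩ P t).card → Y ∩ P s = P s) := by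
  classical
  set B : Fin m → Finset α := fun i => (Finset.univ.filter (· ≤ i)).biUnion P with hB
  have hclsm : ∀ (p : α) (j : Fin m), p ∈ P j → cls p = j := by
    intro p j hp
    by_contra h
    exact Finset.disjoint_left.mp (hdisj _ _ h) (hcls p) hp
  have hmemB : ∀ (p : α) (i : Fin m), p ∈ B i ↔ cls p ≤ i := by
    intro p i
    simp only [hB, Finset.mem_biUnion, Finset.mem_filter, Finset.mem_univ, true_and]
    constructor
    · rintro ⟨j, hji, hpj⟩
      rw [hclsm p j hpj]; exact hji
    · intro h; exact ⟨cls p, h, hcls p⟩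
  have hPB : ∀ i j : Fin m, j ≤ i → P j ⊆ B i := by
    intro i j hj p hp
    rw [hmemB, hclsm p j hp]; exact hj
  have hcardB : ∀ (X : Finset α) (i : Fin m),
      (X ∩ B i).card = ∑ j ∈ Finset.univ.filter (· ≤ i), (X ∩ P j).card := by
    intro X i
    rw [hB, Finset.inter_biUnion, Finset.card_biUnion]
    intro j _ l _ hjl
    exact Finset.disjoint_of_subset_left Finset.inter_subset_right
      (Finset.disjoint_of_subset_right Finset.inter_subset_right (hdisj j l hjl))
  -- quota is feasible at every level
  have hkB : ∀ n (h : n < m), kk ⟨n, h⟩ ≤ (B ⟨n, h⟩).card := by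
    intro n
    induction n with
    | zero =>
      intro h
      calc kk ⟨0, h⟩ ≤ (P ⟨0, hm⟩).card := hk1
        _ ≤ (B ⟨0, h⟩).card := Finset.card_le_card (hPB _ _ le_rfl)
    | succ n ih =>
      intro h
      have h' : n < m := Nat.lt_of_succ_lt h
      have hd : Disjoint (B ⟨n, h'⟩) (P ⟨n + 1, h⟩) := by
        rw [hB]
        refine Finset.disjoint_biUnion_left _ _ _ |>.mpr ?_
        intro j hj
        refine hdisj _ _ ?_
        intro hEq
        subst hEq
        simp only [Finset.mem_filter, Finset.mem_univ, true_and] at hj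
        have := hj
        simp only [Fin.le_def] at this
        omega
      have hsub : B ⟨n, h'⟩ ∪ P ⟨n + 1, h⟩ ⊆ B ⟨n + 1, h⟩ := by
        apply Finset.union_subset
        · rw [hB]
          apply Finset.biUnion_subset_biUnion_of_subset_left
          intro j hj
          simp only [Finset.mem_filter, Finset.mem_univ, true_and, Fin.le_def] at hj ⊢
          omega
        · exact hPB _ _ le_rfl
      have hcard : (B ⟨n, h'⟩).card + (P ⟨n + 1, h⟩).card ≤ (B ⟨n + 1, h⟩).card := by
        rw [← Finset.card_union_of_disjoint hd]
        exact Finset.card_le_card hsub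
      have hki' : kk ⟨n + 1, h⟩ < kk ⟨n, h'⟩ + (P ⟨n + 1, h⟩).card := by
        simpa using hki ⟨n + 1, h⟩ (by simp)
      have := ih h'
      omega
  have hkB' : ∀ i : Fin m, kk i ≤ (B i).card := fun i => hkB i.val i.isLt
  -- every part is nonempty
  have hPne : ∀ j : Fin m, 0 < (P j).card := by
    intro j
    rcases Nat.eq_zero_or_pos j.val with h0 | h1
    · have hj : j = ⟨0, hm⟩ := Fin.ext h0
      rw [hj]
      exact lt_of_lt_of_le (hpos _) hk1
    · have h2 := hki j h1
      have h3 : (⟨(j : ℕ) - 1, Nat.lt_of_le_of_lt (Nat.sub_le _ _) j.isLt⟩ : Fin m) < j := by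
        rw [Fin.lt_def]; simp; omega
      have := hmonok _ _ h3
      omega
  -- the universal coalition wins, so Y misses somebody
  have hwinU : win Finset.univ := by
    rw [hwin]
    intro i
    rw [Finset.univ_inter]
    exact hkB' i
  obtain ⟨p0, hp0⟩ : ∃ p, p ∉ Y := by
    by_contra h
    push_neg at h
    exact hlose (Finset.eq_univ_iff_forall.mpr h ▸ hwinU)
  -- pick a failing index
  obtain ⟨i, hifail⟩ : ∃ i : Fin m, (Y ∩ B i).card < kk i := by
    by_contra h
    push_neg at h
    exact hlose ((hwin Y).mpr h)
  have hwin' : ∀ X : Finset α, win X → ∀ j : Fin m, kk j ≤ (X ∩ B j).card :=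
    fun X h j => (hwin X).mp h j
  -- every non-member of Y lives in the first i parts
  have hA : ∀ p, p ∉ Y → cls p ≤ i := by
    intro p hp
    have hw := hwin' _ (hadd p hp) i
    by_contra hle
    rw [Finset.insert_inter_of_notMem (fun h => hle ((hmemB p i).mp h))] at hw
    omega
  -- exact count at level i
  have hEq : (Y ∩ B i).card = kk i - 1 := by
    have hw := hwin' _ (hadd p0 hp0) i
    have hle : (insert p0 Y ∩ B i).card ≤ (Y ∩ B i).card + 1 := by
      have hsub : insert p0 Y ∩ B i ⊆ insert p0 (Y ∩ B i) := by
        intro x hx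
        simp only [Finset.mem_inter, Finset.mem_insert] at hx ⊢
        tauto
      exact le_trans (Finset.card_le_card hsub) (Finset.card_insert_le _ _)
    omega
  -- the shift contradiction
  have hC : ∀ p ∈ Y, cls p ≤ i → ∀ q, q ∉ Y → cls q ≤ i → cls q < cls p → False := by
    intro p hpY hpi q hqY hqi hlt
    have hw := hwin' _ (hshift p hpY q hqY hlt) i
    have hpB : p ∈ Y ∩ B i := Finset.mem_inter.mpr ⟨hpY, (hmemB p i).mpr hpi⟩
    have hqB : q ∈ B i := (hmemB q i).mpr hqi
    have h1 : insert q (Y.erase p) ∩ B i = insert q ((Y ∩ B i).erase p) := by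
      rw [Finset.insert_inter_of_mem hqB, Finset.erase_inter]
    have hqn : q ∉ (Y ∩ B i).erase p := fun h =>
      hqY (Finset.mem_inter.mp (Finset.mem_of_mem_erase h)).1
    have h2 : (insert q (Y.erase p) ∩ B i).card = (Y ∩ B i).card - 1 + 1 := by
      rw [h1, Finset.card_insert_of_notMem hqn, Finset.card_erase_of_mem hpB]
    have h3 : 1 ≤ (Y ∩ B i).card := Finset.card_pos.mpr ⟨p, hpB⟩
    have h4 := hpos i
    omega
  refine ⟨i, ?_, ?_, ?_, ?_⟩
  · -- parts after i are full
    intro j hij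
    rw [Finset.inter_eq_right]
    intro p hp
    by_contra hpY
    have h1 := hA p hpY
    rw [hclsm p j hp] at h1
    exact absurd (lt_of_lt_of_le hij h1) (lt_irrefl i)
  · rw [← hcardB Y i]
    exact hEq
  · -- part i is not full
    by_contra h
    push_neg at h
    have hfull : Y ∩ P i = P i :=
      Finset.eq_of_subset_of_card_le Finset.inter_subset_right h
    have hPi : P i ⊆ Y := fun x hx =>
      (Finset.mem_inter.mp (hfull ▸ hx)).1
    obtain ⟨p, hp⟩ := Finset.card_pos.mp (hPne i)
    obtain ⟨q, hqB, hqn⟩ : ∃ q, q ∈ B i ∧ q ∉ Y ∩ B i := by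
      by_contra hcon
      push_neg at hcon
      have : B i ⊆ Y ∩ B i := fun x hx => hcon x hx
      have := Finset.card_le_card this
      have := hkB' i
      omega
    have hqY : q ∉ Y := fun h => hqn (Finset.mem_inter.mpr ⟨h, hqB⟩)
    have hq1 : cls q ≤ i := (hmemB q i).mp hqB
    have hq2 : cls q ≠ i := by
      intro h
      exact hqY (hPi (h ▸ hcls q))
    have hp1 : cls p = i := hclsm p i hp
    exact hC p (hPi hp) (le_of_eq hp1) q hqY hq1
      (by rw [hp1]; exact lt_of_le_of_ne hq1 hq2)
  · -- nonempty parts are preceded by full parts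
    intro t s hst hti hpos'
    obtain ⟨p, hp⟩ := Finset.card_pos.mp hpos'
    obtain ⟨hpY, hpt⟩ := Finset.mem_inter.mp hp
    have hp1 : cls p = t := hclsm p t hpt
    rw [Finset.inter_eq_right]
    by_contra hsub
    obtain ⟨q, hq, hqY⟩ := Finset.not_subset.mp hsub
    have hq1 : cls q = s := hclsm q s hq
    exact hC p hpY (hp1 ▸ hti) q hqY (hq1 ▸ le_of_lt (lt_of_lt_of_le hst hti))
      (by rw [hp1, hq1]; exact hst)
end
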